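/- If a group G acts faithfully on an infinite set X so that for every m the action is m-transitive, and H is a nontrivial normal subgroup of G, then H also acts m-transitively on X for every m. -/

import Mathlib

open Function

section Aux

variable {G X : Type*} [Group G] [MulAction G X]

/-- Extend: find a group element fixing `β` pointwise and sending `p` to `q`. -/
lemma aux_extend
    (hht : ∀ (m : ℕ) (f g : Fin m ↪ X), ∃ γ : G, ∀ i : Fin m, γ • f i = g i)
    {n k : ℕ} (β : Fin n → X) (p q : Fin k → X)
    (hu : Injective (Sum.elim β p)) (hv : Injective (Sum.elim β q)) :
    ∃ g : G, (∀ i, g • β i = β i) ∧ ∀ j, g • p j = q j := by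
  obtain ⟨γ, hγ⟩ := hht (n + k)
    ⟨Sum.elim β p ∘ finSumFinEquiv.symm, hu.comp (Equiv.injective _)⟩
    ⟨Sum.elim β q ∘ finSumFinEquiv.symm, hv.comp (Equiv.injective _)⟩
  refine ⟨γ, fun i => ?_, fun j => ?_⟩
  · have := hγ (finSumFinEquiv (Sum.inl i)); simpa using this
  · have := hγ (finSumFinEquiv (Sum.inr j)); simpa using this

lemma inj2 {a b : X} (hab : a ≠ b) : Injective ![a, b] := by
  intro i j hij
  fin_cases i <;> fin_cases j <;> simp_all

lemma inj4 {a b c d : X} (hab : a ≠ b) (hac : a ≠ c) (had : a ≠ d)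
    (hbc : b ≠ c) (hbd : b ≠ d) (hcd : c ≠ d) : Injective ![a, b, c, d] := by
  intro i j hij
  fin_cases i <;> fin_cases j <;> simp_all

end Aux

/-- `N n` : every `n`-point pointwise stabilizer meets `H` nontrivially. -/
def Nprop {G : Type*} [Group G] (H : Subgroup G) (X : Type*) [MulAction G X] (n : ℕ) : Prop :=
  ∀ β : Fin n → X, Injective β → ∃ h : G, h ∈ H ∧ h ≠ 1 ∧ ∀ i, h • β i = β i

/-- `S n` : `H ∩ (n-point stabilizer)` is transitive on the complement. -/
def Sprop {G : Type*} [Group G] (H : Subgroup G) (X : Type*) [MulAction G X] (n : ℕ) : Prop :=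
  ∀ β : Fin n → X, Injective β → ∀ x y : X, (∀ i, x ≠ β i) → (∀ i, y ≠ β i) →
    ∃ h : G, h ∈ H ∧ (∀ i, h • β i = β i) ∧ h • x = y

section Main

variable {G X : Type*} [Group G] [MulAction G X] [FaithfulSMul G X] [Infinite X]

variable (H : Subgroup G) [H.Normal]

lemma NtoS (hht : ∀ (m : ℕ) (f g : Fin m ↪ X), ∃ γ : G, ∀ i : Fin m, γ • f i = g i)
    {n : ℕ} (hN : Nprop H X n) : Sprop H X n := by
  unfold Sprop; intro β hβ x y hx hy
  rcases eq_or_ne x y with rfl | hxy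
  · exact ⟨1, one_mem H, fun i => one_smul G _, one_smul G _⟩
  obtain ⟨h₀, h₀H, h₀ne, h₀fix⟩ := hN β hβ
  have : ∃ a : X, h₀ • a ≠ a := by
    by_contra hcon
    push_neg at hcon
    exact h₀ne (eq_of_smul_eq_smul (fun a : X => (hcon a).trans (one_smul G a).symm))
  obtain ⟨a, ha⟩ := this
  have haβ : ∀ i, a ≠ β i := by
    rintro i rfl; exact ha (h₀fix i)
  have hh₀aβ : ∀ i, h₀ • a ≠ β i := by
    intro i he
    apply haβ i
    have h1 : a = h₀⁻¹ • β i := by rw [← he, inv_smul_smul]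
    rw [h1, inv_smul_eq_iff, h₀fix i]
  have hane : a ≠ h₀ • a := fun he => ha he.symm
  obtain ⟨g, gfix, gmap⟩ := aux_extend hht β ![a, h₀ • a] ![x, y]
    (Injective.sumElim hβ (inj2 hane) (by
      intro i j he
      fin_cases j <;> simp only [Matrix.cons_val_zero, Matrix.cons_val_one, Matrix.head_cons,
        Fin.mk_zero, Fin.mk_one, Fin.isValue] at he
      · exact haβ i he.symm
      · exact hh₀aβ i he.symm))
    (Injective.sumElim hβ (inj2 hxy) (by
      intro i j he
      fin_cases j <;> simp only [Matrix.cons_val_zero, Matrix.cons_val_one, Matrix.head_cons,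
        Fin.mk_zero, Fin.mk_one, Fin.isValue] at he
      · exact hx i he.symm
      · exact hy i he.symm))
  refine ⟨g * h₀ * g⁻¹, Subgroup.Normal.conj_mem ‹H.Normal› h₀ h₀H g, fun i => ?_, ?_⟩
  · have hg : g⁻¹ • β i = β i := inv_smul_eq_iff.mpr (gfix i).symm
    simp [mul_smul, hg, h₀fix i, gfix i]
  · have h1 : g • a = x := by simpa using gmap 0
    have h2 : g • (h₀ • a) = y := by simpa using gmap 1
    have hg : g⁻¹ • x = a := inv_smul_eq_iff.mpr h1.symm
    simp [mul_smul, hg, h2]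

lemma Nstep (hht : ∀ (m : ℕ) (f g : Fin m ↪ X), ∃ γ : G, ∀ i : Fin m, γ • f i = g i)
    {n : ℕ} (hN : Nprop H X n) : Nprop H X (n + 1) := by
  classical
  unfold Nprop at *
  intro β hβ
  by_contra hc
  push_neg at hc
  have htriv : ∀ h : G, h ∈ H → (∀ i, h • β i = β i) → h = 1 := by
    intro h hm hfix
    by_contra hne
    obtain ⟨i, hi⟩ := hc h hm hne
    exact hi (hfix i)
  set β' : Fin n → X := β ∘ Fin.castSucc with hβ'def
  set a : X := β (Fin.last n) with hadef
  have hβ' : Injective β' := hβ.comp (Fin.castSucc_injective n)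
  have haβ' : ∀ i, a ≠ β' i := by
    intro i he
    have h2 := hβ he
    have hlt := i.isLt
    simp only [Fin.ext_iff, Fin.val_last, Fin.coe_castSucc] at h2
    omega
  -- uniqueness: elements of H fixing β' pointwise are determined by where they send a
  have huniq : ∀ h h' : G, h ∈ H → h' ∈ H → (∀ i, h • β' i = β' i) →
      (∀ i, h' • β' i = β' i) → h • a = h' • a → h = h' := by
    intro h h' hm hm' hfix hfix' hha
    have : h'⁻¹ * h = 1 := by
      apply htriv _ (mul_mem (inv_mem hm') hm)
      intro i
      induction i using Fin.lastCases with
      | last => rw [mul_smul, ← hadef, hha, inv_smul_smul]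
      | cast i =>
        have e1 : h • β (Fin.castSucc i) = β (Fin.castSucc i) := hfix i
        have e2 : h' • β (Fin.castSucc i) = β (Fin.castSucc i) := hfix' i
        rw [mul_smul, e1, inv_smul_eq_iff, e2]
    calc h = h' * (h'⁻¹ * h) := by group
    _ = h' := by rw [this, mul_one]
  obtain ⟨k₁, k₁H, k₁ne, k₁fix⟩ := hN β' hβ'
  have hS : Sprop H X n := NtoS H hht hN
  have k1a : k₁ • a ≠ a := by
    intro he
    exact k₁ne (huniq k₁ 1 k₁H (one_mem H) k₁fix (fun i => one_smul G _)
      (by rw [he, one_smul]))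
  -- points moved by k's stay outside range β'
  have hmove : ∀ (k : G), (∀ i, k • β' i = β' i) → ∀ x : X, (∀ i, x ≠ β' i) →
      ∀ i, k • x ≠ β' i := by
    intro k kfix x hx i he
    apply hx i
    have : x = k⁻¹ • β' i := by rw [← he, inv_smul_smul]
    rw [this, inv_smul_eq_iff, kfix i]
  -- pick c avoiding a finite set
  obtain ⟨c, hc2⟩ := Infinite.exists_notMem_finset
    ((Finset.univ.image β') ∪ {a, k₁ • a, k₁⁻¹ • a})
  simp only [Finset.mem_union, Finset.mem_image, Finset.mem_insert, Finset.mem_singleton,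
    Finset.mem_univ, true_and, not_or, not_exists] at hc2
  obtain ⟨hcβ', hca, hca1, hca1'⟩ := hc2
  obtain ⟨k₂, k₂H, k₂fix, k₂a⟩ := hS β' hβ' a c haβ' (fun i => fun he => hcβ' i he.symm)
  -- the four points
  set a₁ : X := k₁ • a with ha₁
  set a₂ : X := c with ha₂
  set a₃ : X := k₁ • c with ha₃
  have k₂ne1 : k₂ ≠ 1 := fun he => hca (by rw [← k₂a, he, one_smul])
  have h12 : (k₁ * k₂) • a = a₃ := by rw [mul_smul, k₂a]
  have k₁k₂fix : ∀ i, (k₁ * k₂) • β' i = β' i := fun i => by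
    rw [mul_smul, k₂fix i, k₁fix i]
  -- distinctness
  have d1 : a ≠ a₁ := fun he => k1a he.symm
  have d2 : a ≠ a₂ := fun he => hca he.symm
  have d3 : a ≠ a₃ := by
    intro he
    rw [ha₃] at he
    exact hca1' (by rw [ha₂, he, inv_smul_smul])
  have d4 : a₁ ≠ a₂ := fun he => hca1 he.symm
  have d5 : a₁ ≠ a₃ := by
    intro he
    rw [ha₁, ha₃] at he
    exact hca (smul_left_cancel k₁ he).symm
  have d6 : a₂ ≠ a₃ := by
    intro he
    apply k₁ne
    have : (k₁ * k₂) • a = k₂ • a := by rw [h12, ← he, ha₂, k₂a]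
    have := huniq (k₁ * k₂) k₂ (mul_mem k₁H k₂H) k₂H k₁k₂fix k₂fix this
    calc k₁ = (k₁ * k₂) * k₂⁻¹ := by group
    _ = k₂ * k₂⁻¹ := by rw [this]
    _ = 1 := mul_inv_cancel k₂
  have ha₁β' : ∀ i, a₁ ≠ β' i := hmove k₁ k₁fix a haβ'
  have ha₂β' : ∀ i, a₂ ≠ β' i := fun i he => hcβ' i he.symm
  have ha₃β' : ∀ i, a₃ ≠ β' i := hmove k₁ k₁fix c (fun i he => hcβ' i he.symm)
  -- pick b
  obtain ⟨b, hb⟩ := Infinite.exists_notMem_finset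
    ((Finset.univ.image β') ∪ {a, a₁, a₂, a₃})
  simp only [Finset.mem_union, Finset.mem_image, Finset.mem_insert, Finset.mem_singleton,
    Finset.mem_univ, true_and, not_or, not_exists] at hb
  obtain ⟨hbβ', hba, hba1, hba2, hba3⟩ := hb
  -- the 3-transitivity contradiction
  obtain ⟨g, gfix, gmap⟩ := aux_extend hht β' ![a, a₁, a₂, a₃] ![a, a₁, a₂, b]
    (Injective.sumElim hβ' (inj4 d1 d2 d3 d4 d5 d6) (by
      intro i j he
      fin_cases j <;> simp only [Matrix.cons_val_zero, Matrix.cons_val_one, Matrix.head_cons,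
        Matrix.cons_val_two, Matrix.tail_cons, Matrix.cons_val_three,
        Fin.mk_zero, Fin.mk_one, Fin.isValue] at he
      · exact haβ' i he.symm
      · exact ha₁β' i he.symm
      · exact ha₂β' i he.symm
      · exact ha₃β' i he.symm))
    (Injective.sumElim hβ' (inj4 d1 d2 (fun he => hba he.symm) d4
        (fun he => hba1 he.symm) (fun he => hba2 he.symm)) (by
      intro i j he
      fin_cases j <;> simp only [Matrix.cons_val_zero, Matrix.cons_val_one, Matrix.head_cons,
        Matrix.cons_val_two, Matrix.tail_cons, Matrix.cons_val_three,
        Fin.mk_zero, Fin.mk_one, Fin.isValue] at he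
      · exact haβ' i he.symm
      · exact ha₁β' i he.symm
      · exact ha₂β' i he.symm
      · exact hbβ' i he))
  have ga : g • a = a := by simpa using gmap 0
  have ga1 : g • a₁ = a₁ := by simpa using gmap 1
  have ga2 : g • a₂ = a₂ := by simpa using gmap 2
  have ga3 : g • a₃ = b := by simpa using gmap 3
  have gconjfix : ∀ (k : G), (∀ i, k • β' i = β' i) → ∀ i, (g * k * g⁻¹) • β' i = β' i := by
    intro k kfix i
    have hg : g⁻¹ • β' i = β' i := inv_smul_eq_iff.mpr (gfix i).symm
    simp [mul_smul, hg, kfix i, gfix i]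
  have hga : g⁻¹ • a = a := inv_smul_eq_iff.mpr ga.symm
  have e1 : g * k₁ * g⁻¹ = k₁ := by
    apply huniq _ _ (Subgroup.Normal.conj_mem ‹H.Normal› k₁ k₁H g) k₁H
      (gconjfix k₁ k₁fix) k₁fix
    rw [mul_smul, mul_smul, hga, ← ha₁, ga1]
  have e2 : g * k₂ * g⁻¹ = k₂ := by
    apply huniq _ _ (Subgroup.Normal.conj_mem ‹H.Normal› k₂ k₂H g) k₂H
      (gconjfix k₂ k₂fix) k₂fix
    rw [mul_smul, mul_smul, hga, k₂a, ga2]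
  have e3 : g * (k₁ * k₂) * g⁻¹ = k₁ * k₂ := by
    calc g * (k₁ * k₂) * g⁻¹ = (g * k₁ * g⁻¹) * (g * k₂ * g⁻¹) := by group
    _ = k₁ * k₂ := by rw [e1, e2]
  have : (k₁ * k₂) • a = b := by
    rw [← e3, mul_smul, mul_smul, hga, h12, ga3]
  rw [h12] at this
  exact hba3 this.symm

lemma Nall (hht : ∀ (m : ℕ) (f g : Fin m ↪ X), ∃ γ : G, ∀ i : Fin m, γ • f i = g i)
    (hH : H ≠ ⊥) : ∀ n, Nprop H X n := by
  intro n
  induction n with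
  | zero =>
    obtain ⟨⟨h, hm⟩, hne⟩ := Subgroup.ne_bot_iff_exists_ne_one.mp hH
    exact fun β _ => ⟨h, hm, by simpa using hne, fun i => i.elim0⟩
  | succ n ih => exact Nstep H hht ih

end Main

/-- If `G` acts faithfully and `m`-transitively on an infinite set `X` for every `m`,
then every nontrivial normal subgroup `H` of `G` also acts `m`-transitively on `X`
for every `m`. -/
theorem stmt_16 {G X : Type*} [Group G] [MulAction G X] [FaithfulSMul G X] [Infinite X]
    (hht : ∀ (m : ℕ) (f g : Fin m ↪ X), ∃ γ : G, ∀ i : Fin m, γ • f i = g i)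
    (H : Subgroup G) [H.Normal] (hH : H ≠ ⊥) :
    ∀ (m : ℕ) (f g : Fin m ↪ X), ∃ h ∈ H, ∀ i : Fin m, h • f i = g i := by
  have hS : ∀ n, Sprop H X n := fun n => NtoS H hht (Nall H hht hH n)
  intro m
  induction m with
  | zero => exact fun f g => ⟨1, one_mem H, fun i => i.elim0⟩
  | succ m ih =>
    intro f g
    obtain ⟨h₁, h₁H, h₁map⟩ := ih
      ⟨fun i => f (Fin.castSucc i), fun i j hij => Fin.castSucc_injective m (f.injective hij)⟩
      ⟨fun i => g (Fin.castSucc i), fun i j hij => Fin.castSucc_injective m (g.injective hij)⟩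
    set x : X := h₁ • f (Fin.last m) with hx
    rcases eq_or_ne x (g (Fin.last m)) with he | hne
    · refine ⟨h₁, h₁H, fun i => ?_⟩
      induction i using Fin.lastCases with
      | last => exact he
      | cast i => exact h₁map i
    · have hxcond : ∀ i : Fin m, x ≠ g (Fin.castSucc i) := by
        intro i he
        have hmap : h₁ • f (Fin.castSucc i) = g (Fin.castSucc i) := h₁map i
        have h3 : h₁ • f (Fin.last m) = h₁ • f (Fin.castSucc i) := by rw [← hx, he, ← hmap]
        have h4 := f.injective (smul_left_cancel h₁ h3)
        have hlt := i.isLt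
        simp only [Fin.ext_iff, Fin.val_last, Fin.coe_castSucc] at h4
        omega
      have hycond : ∀ i : Fin m, g (Fin.last m) ≠ g (Fin.castSucc i) := by
        intro i he
        have h4 := g.injective he
        have hlt := i.isLt
        simp only [Fin.ext_iff, Fin.val_last, Fin.coe_castSucc] at h4
        omega
      obtain ⟨h₂, h₂H, h₂fix, h₂x⟩ := hS m (fun i => g (Fin.castSucc i))
        (fun i j hij => Fin.castSucc_injective m (g.injective hij))
        x (g (Fin.last m)) hxcond hycond
      refine ⟨h₂ * h₁, mul_mem h₂H h₁H, fun i => ?_⟩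
      induction i using Fin.lastCases with
      | last => rw [mul_smul, ← hx, h₂x]
      | cast i =>
        rw [mul_smul]
        have h5 : h₁ • f (Fin.castSucc i) = g (Fin.castSucc i) := h₁map i
        rw [h5, h₂fix i]
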